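/- Let A be an N×N primitive {0,1}-matrix and ν an admissible word with |ν| > 3(N+1) whose last letter has at least two admissible successors (#{i : A_{ν_{|ν|}, i} = 1} ≥ 2). Then the number of indices i ∈ {1,...,|ν|−1} with transition probability P_{ν_i, ν_{i+1}} ≠ 1 is strictly greater than |ν| / (3(N+1)). -/

import Mathlib

open scoped Classical

/-- monochains lemma: If ν is an admissible word of length m > 3(N+1)
(encoded as ν 0, ..., ν (m−1)) whose last letter has at least two admissible successors,
then the number of indices i ∈ {0,...,m−2} with Parry transition probability
P_{ν_i, ν_{i+1}} ≠ 1 is strictly greater than m / (3(N+1)). -/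
theorem monochains (N : ℕ) (A : Matrix (Fin N) (Fin N) ℝ)
    (h01 : ∀ i j, A i j = 0 ∨ A i j = 1)
    (hprim : ∃ k : ℕ, ∀ i j, 0 < (A ^ k) i j)
    (u : Fin N → ℝ) (lamMax : ℝ) (hlam : 0 < lamMax) (hu : ∀ i, 0 < u i)
    (hAu : ∀ i, ∑ j, A i j * u j = lamMax * u i)
    (P : Fin N → Fin N → ℝ) (hP : ∀ i j, P i j = A i j * u j / (lamMax * u i))
    (ν : ℕ → Fin N) (m : ℕ) (hm : 3 * (N + 1) < m)
    (hadm : ∀ i, i + 1 < m → A (ν i) (ν (i + 1)) = 1)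
    (hbranch : 2 ≤ (Finset.univ.filter (fun i => A (ν (m - 1)) i = 1)).card) :
    (m : ℝ) / (3 * (N + 1)) <
      (((Finset.range (m - 1)).filter (fun i => P (ν i) (ν (i + 1)) ≠ 1)).card : ℝ) := by
  classical
  have hN2 : 2 ≤ N := by
    calc 2 ≤ (Finset.univ.filter (fun i => A (ν (m - 1)) i = 1)).card := hbranch
    _ ≤ (Finset.univ : Finset (Fin N)).card := Finset.card_filter_le _ _
    _ = N := by simp
  have hA0 : ∀ i j, (0:ℝ) ≤ A i j := fun i j => by rcases h01 i j with h | h <;> simp [h]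
  have hAk0 : ∀ k (i j : Fin N), (0:ℝ) ≤ (A ^ k) i j := by
    intro k
    induction k with
    | zero => intro i j; simp [Matrix.one_apply]; split <;> norm_num
    | succ k ih =>
      intro i j
      rw [pow_succ, Matrix.mul_apply]
      exact Finset.sum_nonneg fun t _ => mul_nonneg (ih i t) (hA0 t j)
  -- key: P = 1 forces the row of ν i to vanish off ν (i+1)
  have key : ∀ i : ℕ, P (ν i) (ν (i+1)) = 1 → ∀ j, j ≠ ν (i + 1) → A (ν i) j = 0 := by
    intro i hPi j hj
    have hd : lamMax * u (ν i) ≠ 0 := ne_of_gt (mul_pos hlam (hu _))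
    rw [hP, div_eq_one_iff_eq hd] at hPi
    have hsum := hAu (ν i)
    have herase := Finset.sum_erase_add Finset.univ (fun j => A (ν i) j * u j)
      (Finset.mem_univ (ν (i+1)))
    have h0 : ∑ t ∈ Finset.univ.erase (ν (i+1)), A (ν i) t * u t = 0 := by
      linarith
    have := (Finset.sum_eq_zero_iff_of_nonneg (fun t _ => mul_nonneg (hA0 _ t) (hu t).le)).mp h0
      j (Finset.mem_erase.mpr ⟨hj, Finset.mem_univ j⟩)
    have huj := hu j
    rcases mul_eq_zero.mp this with h | h
    · exact h
    · exact absurd h (ne_of_gt huj)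
  -- main: every window of N+1 consecutive steps contains a non-deterministic one
  have main : ∀ i : ℕ, i + N + 1 ≤ m - 1 → ∃ j, i ≤ j ∧ j ≤ i + N ∧ P (ν j) (ν (j+1)) ≠ 1 := by
    intro i hi
    by_contra hc
    push_neg at hc
    -- all states ν j, j ∈ [i, i+N], have a single admissible successor ν (j+1)
    have det : ∀ j, i ≤ j → j ≤ i + N → ∀ t, t ≠ ν (j+1) → A (ν j) t = 0 :=
      fun j h1 h2 => key j (hc j h1 h2)
    -- pigeonhole
    have hcard : (Finset.univ : Finset (Fin N)).card < (Finset.Icc i (i + N)).card := by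
      rw [Nat.card_Icc]; simp; omega
    obtain ⟨a, ha, b, hb, hab, hvab⟩ :=
      Finset.exists_ne_map_eq_of_card_lt_of_maps_to hcard (fun x _ => Finset.mem_univ (ν x))
    -- wlog a < b
    obtain ⟨a, b, ha, hb, haltb, hv⟩ : ∃ a b, a ∈ Finset.Icc i (i+N) ∧ b ∈ Finset.Icc i (i+N) ∧
        a < b ∧ ν a = ν b := by
      rcases lt_or_gt_of_ne hab with h | h
      · exact ⟨a, b, ha, hb, h, hvab⟩
      · exact ⟨b, a, hb, ha, h, hvab.symm⟩
    rw [Finset.mem_Icc] at ha hb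
    set L := b - a with hL
    have hL1 : 1 ≤ L := by omega
    set c : ℕ → Fin N := fun k => ν (a + k % L) with hc'
    -- each c k kills everything except c (k+1)
    have cyc : ∀ k t, t ≠ c (k+1) → A (c k) t = 0 := by
      intro k t ht
      have hmod : k % L < L := Nat.mod_lt _ (by omega)
      have hidx1 : i ≤ a + k % L := by omega
      have hidx2 : a + k % L ≤ i + N := by omega
      have hmm : (k % L + 1) % L = (k + 1) % L := Nat.mod_add_mod k L 1
      have hsucc : ν (a + k % L + 1) = c (k + 1) := by
        rcases eq_or_lt_of_le (Nat.succ_le_of_lt hmod) with he | hlt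
        · -- k % L + 1 = L, wrap around
          have h1 : a + k % L + 1 = b := by omega
          have h2 : (k+1) % L = 0 := by rw [← hmm, show k % L + 1 = L from he, Nat.mod_self]
          rw [h1, hc']; simp only [h2, Nat.add_zero]; exact hv.symm
        · have h2 : (k+1) % L = k % L + 1 := by rw [← hmm, Nat.mod_eq_of_lt hlt]
          rw [hc']; simp only [h2, Nat.add_assoc]
      refine det _ hidx1 hidx2 t ?_
      rw [hsucc]; exact ht
    -- unique path: any positive entry of A^k in row c 0 is at c k
    have path : ∀ k (j : Fin N), 0 < (A ^ k) (c 0) j → j = c k := by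
      intro k
      induction k with
      | zero =>
        intro j hj
        rw [pow_zero, Matrix.one_apply] at hj
        by_contra hne
        rw [if_neg (fun h => hne h.symm)] at hj
        exact lt_irrefl 0 hj
      | succ k ih =>
        intro j hj
        rw [pow_succ, Matrix.mul_apply] at hj
        obtain ⟨t, -, ht⟩ : ∃ t ∈ Finset.univ, (A ^ k) (c 0) t * A t j ≠ 0 := by
          by_contra hall
          push_neg at hall
          rw [Finset.sum_eq_zero hall] at hj
          exact lt_irrefl 0 hj
        have h1 : 0 < (A ^ k) (c 0) t := by
          rcases lt_or_eq_of_le (hAk0 k (c 0) t) with h | h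
          · exact h
          · exact absurd (by rw [← h]; ring) ht
        have h2 : A t j ≠ 0 := fun h => ht (by rw [h, mul_zero])
        have := ih t h1
        subst this
        by_contra hne
        exact h2 (cyc k j hne)
    obtain ⟨k, hk⟩ := hprim
    obtain ⟨j, hj⟩ := Fintype.exists_ne_of_one_lt_card (by simp; omega) (c k)
    exact hj (path k j (hk (c 0) j))
  -- counting
  set S := (Finset.range (m - 1)).filter (fun i => P (ν i) (ν (i + 1)) ≠ 1) with hS
  set q := (m - 1) / (N + 1) with hqdef
  have hq3 : 3 ≤ q := by
    rw [hqdef, Nat.le_div_iff_mul_le (show 0 < N + 1 by omega)]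
    omega
  have hqle : q * (N + 1) ≤ m - 1 := Nat.div_mul_le_self _ _
  have hblock : ∀ t, t < q → ∃ j, j ∈ S ∧ t * (N + 1) ≤ j ∧ j < (t + 1) * (N + 1) := by
    intro t ht
    have hmul : (t + 1) * (N + 1) ≤ q * (N + 1) := Nat.mul_le_mul_right _ ht
    have hring : (t + 1) * (N + 1) = t * (N + 1) + (N + 1) := by ring
    have h1 : t * (N + 1) + N + 1 ≤ m - 1 := by omega
    obtain ⟨j, hj1, hj2, hj3⟩ := main (t * (N + 1)) h1
    refine ⟨j, ?_, hj1, by omega⟩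
    rw [hS, Finset.mem_filter, Finset.mem_range]
    exact ⟨by omega, hj3⟩
  set g : ℕ → ℕ := fun t => if h : t < q then (hblock t h).choose else 0 with hg
  have hgspec : ∀ t, t < q → g t ∈ S ∧ t * (N + 1) ≤ g t ∧ g t < (t + 1) * (N + 1) := by
    intro t ht
    rw [hg]; simp only [dif_pos ht]
    exact (hblock t ht).choose_spec
  have hmono : ∀ t1 t2, t1 < q → t2 < q → t1 < t2 → g t1 < g t2 := by
    intro t1 t2 h1 h2 hlt
    have s1 := hgspec t1 h1
    have s2 := hgspec t2 h2
    have : (t1 + 1) * (N + 1) ≤ t2 * (N + 1) := Nat.mul_le_mul_right _ hlt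
    omega
  have hinj : Set.InjOn g (Finset.range q) := by
    intro t1 h1 t2 h2 he
    simp only [Finset.coe_range, Set.mem_Iio] at h1 h2
    rcases lt_trichotomy t1 t2 with h | h | h
    · exact absurd he (ne_of_lt (hmono t1 t2 h1 h2 h))
    · exact h
    · exact absurd he.symm (ne_of_lt (hmono t2 t1 h2 h1 h))
  have hqcard : q ≤ S.card := by
    have := Finset.card_le_card_of_injOn g
      (fun t ht => (hgspec t (Finset.mem_range.mp ht)).1) hinj
    simpa using this
  -- final arithmetic
  rw [div_lt_iff₀ (by positivity)]
  have hB : m - 1 < (q + 1) * (N + 1) := by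
    rw [hqdef] at *
    exact (Nat.div_lt_iff_lt_mul (show 0 < N + 1 by omega)).mp (Nat.lt_succ_self _)
  have hC : (q + 1) * (N + 1) = q * (N + 1) + (N + 1) := by ring
  have hF : q * (N + 1) ≤ S.card * (N + 1) := Nat.mul_le_mul_right _ hqcard
  have hG : 3 * (N + 1) ≤ q * (N + 1) := Nat.mul_le_mul_right _ hq3
  have hnat : m < S.card * (3 * (N + 1)) := by
    have hE : S.card * (3 * (N + 1)) = 3 * (S.card * (N + 1)) := by ring
    omega
  calc (m : ℝ) < (S.card * (3 * (N + 1)) : ℕ) := by exact_mod_cast hnat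
  _ = (S.card : ℝ) * (3 * (N + 1)) := by push_cast; ring
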